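/- Let A ∈ C and let the profile v′ be obtained from v by adding new ballots containing only A and/or changing some ballots σ with A ∉ σ into σ ∪ {A}, with no other changes (so every candidate other than A receives exactly the same votes as before). If some possible outcome of Phragmén's unordered method on v for M seats contains A, then some possible outcome of Phragmén's unordered method on v′ for M seats contains A. -/

import Mathlib

open Finset

/-- The number of ballots containing candidate `i` (as a rational number). -/
def phVotes {C : Type} [Fintype C] [DecidableEq C] (v : Finset C → ℕ) (i : C) : ℚ :=
  ∑ σ ∈ Finset.univ.filter (fun σ : Finset C => i ∈ σ), (v σ : ℚ)

/-- Phragmén's `t_i = (1 + Σ_{σ∋i} v_σ r_σ)/(Σ_{σ∋i} v_σ)` for the current loads `r`. -/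
def phT {C : Type} [Fintype C] [DecidableEq C]
    (v : Finset C → ℕ) (r : Finset C → ℚ) (i : C) : ℚ :=
  (1 + ∑ σ ∈ Finset.univ.filter (fun σ : Finset C => i ∈ σ), (v σ : ℚ) * r σ) / phVotes v i

/-- The ballot loads after electing the candidates in the list `l`
(most recently elected first); initially all loads are `0`, and when `i` is
elected the load of every ballot containing `i` is set to `t_i`. -/
def phLoads {C : Type} [Fintype C] [DecidableEq C] (v : Finset C → ℕ) :
    List C → Finset C → ℚ
  | [], _ => 0
  | i :: l, σ => if i ∈ σ then phT v (phLoads v l) i else phLoads v l σ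

/-- `l` (most recently elected first) is a valid sequence of elections for
Phragmén's unordered method: each newly elected candidate is a not yet elected
candidate with positive vote count minimizing `t_i`. -/
def phValid {C : Type} [Fintype C] [DecidableEq C] (v : Finset C → ℕ) : List C → Prop
  | [] => True
  | i :: l => phValid v l ∧ i ∉ l ∧ 0 < phVotes v i ∧
      ∀ j : C, j ∉ l → 0 < phVotes v j →
        phT v (phLoads v l) i ≤ phT v (phLoads v l) j

/-- `S` is a possible outcome of Phragmén's unordered method for `M` seats:
its elements can be elected in some order by the rule, ties broken arbitrarily. -/
def PhragmenOutcome {C : Type} [Fintype C] [DecidableEq C]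
    (v : Finset C → ℕ) (M : ℕ) (S : Finset C) : Prop :=
  ∃ l : List C, phValid v l ∧ l.length = M ∧ l.toFinset = S

variable {C : Type} [Fintype C] [DecidableEq C]

lemma phValid_suffix (v : Finset C → ℕ) (p q : List C) (h : phValid v (p ++ q)) :
    phValid v q := by
  induction p with
  | nil => exact h
  | cons x p ih => exact ih h.1

lemma phValid_nodup (v : Finset C → ℕ) (l : List C) (h : phValid v l) : l.Nodup := by
  induction l with
  | nil => exact List.nodup_nil
  | cons i l ih => exact List.nodup_cons.2 ⟨h.2.1, ih h.1⟩

lemma phValid_pos (v : Finset C → ℕ) (l : List C) (h : phValid v l) :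
    ∀ c ∈ l, 0 < phVotes v c := by
  induction l with
  | nil => intro c hc; simp at hc
  | cons i l ih =>
    intro c hc
    rcases List.mem_cons.1 hc with rfl | hc
    · exact h.2.2.1
    · exact ih h.1 c hc

lemma phLoads_insertA (v : Finset C → ℕ) (A : C) (l : List C) (hA : A ∉ l)
    (σ : Finset C) (hAσ : A ∉ σ) : phLoads v l (insert A σ) = phLoads v l σ := by
  induction l with
  | nil => rfl
  | cons i l ih =>
    have hiA : i ≠ A := fun h => hA (h ▸ List.mem_cons_self (a := i) (l := l))
    have hmem : i ∈ insert A σ ↔ i ∈ σ := by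
      simp [Finset.mem_insert, hiA]
    have hA' : A ∉ l := fun h => hA (List.mem_cons_of_mem _ h)
    simp only [phLoads, hmem]
    by_cases hi : i ∈ σ <;> simp [hi, ih hA']

lemma phT_mono (v : Finset C → ℕ) (r r' : Finset C → ℚ) (j : C)
    (hr : ∀ σ, r σ ≤ r' σ) (hj : 0 < phVotes v j) :
    phT v r j ≤ phT v r' j := by
  unfold phT
  gcongr with σ hσ
  exact hr σ

lemma loads_le (v : Finset C → ℕ) (l : List C) (hval : phValid v l) :
    ∀ j, j ∉ l → 0 < phVotes v j → ∀ σ, phLoads v l σ ≤ phT v (phLoads v l) j := by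
  induction l with
  | nil =>
    intro j _ hj σ
    show (0:ℚ) ≤ phT v (phLoads v []) j
    unfold phT
    have : (0:ℚ) ≤ 1 + ∑ σ ∈ Finset.univ.filter (fun σ : Finset C => j ∈ σ),
        (v σ : ℚ) * phLoads v [] σ := by
      simp [phLoads]
    positivity
  | cons i l ih =>
    intro j hj hjp σ
    obtain ⟨hval', hil, hip, hmin⟩ := hval
    have hjl : j ∉ l := fun h => hj (List.mem_cons_of_mem _ h)
    have hle : ∀ τ, phLoads v l τ ≤ phLoads v (i :: l) τ := by
      intro τ
      simp only [phLoads]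
      by_cases hiτ : i ∈ τ
      · simpa [hiτ] using ih hval' i hil hip τ
      · simp [hiτ]
    have hTj : phT v (phLoads v l) j ≤ phT v (phLoads v (i :: l)) j :=
      phT_mono v _ _ j hle hjp
    have hij : phT v (phLoads v l) i ≤ phT v (phLoads v l) j := hmin j hjl hjp
    simp only [phLoads]
    by_cases hiσ : i ∈ σ
    · simpa [hiσ, phLoads] using le_trans hij hTj
    · simpa [hiσ, phLoads] using le_trans (ih hval' j hjl hjp σ) hTj
variable {C : Type} [Fintype C] [DecidableEq C]

lemma reindexA (A : C) (p : Finset C → Prop) [DecidablePred p] (f : Finset C → ℚ) :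
    ∑ τ ∈ Finset.univ.filter (fun τ : Finset C => A ∈ τ ∧ p (τ.erase A)), f (τ.erase A)
      = ∑ σ ∈ Finset.univ.filter (fun σ : Finset C => A ∉ σ ∧ p σ), f σ := by
  apply Finset.sum_nbij' (fun τ => τ.erase A) (fun σ => insert A σ)
  · intro τ hτ
    simp only [Finset.mem_filter, Finset.mem_univ, true_and] at hτ ⊢
    exact ⟨Finset.notMem_erase _ _, hτ.2⟩
  · intro σ hσ
    simp only [Finset.mem_filter, Finset.mem_univ, true_and] at hσ ⊢
    rw [Finset.erase_insert hσ.1]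
    exact ⟨Finset.mem_insert_self _ _, hσ.2⟩
  · intro τ hτ
    simp only [Finset.mem_filter, Finset.mem_univ, true_and] at hτ
    exact Finset.insert_erase hτ.1
  · intro σ hσ
    simp only [Finset.mem_filter, Finset.mem_univ, true_and] at hσ
    exact Finset.erase_insert hσ.1
  · intro τ _; rfl

lemma sum_transfer (v v' : Finset C → ℕ) (A : C) (d : Finset C → ℕ) (a : ℕ)
    (hd : ∀ σ : Finset C, A ∉ σ → d σ ≤ v σ)
    (hfree : ∀ σ : Finset C, A ∉ σ → v' σ = v σ - d σ)
    (hwith : ∀ σ : Finset C, A ∈ σ →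
      v' σ = v σ + d (σ.erase A) + (if σ = {A} then a else 0))
    (j : C) (hj : j ≠ A) (r : Finset C → ℚ)
    (hr : ∀ σ, A ∉ σ → r (insert A σ) = r σ) :
    ∑ τ ∈ Finset.univ.filter (fun τ : Finset C => j ∈ τ), (v' τ : ℚ) * r τ
      = ∑ σ ∈ Finset.univ.filter (fun σ : Finset C => j ∈ σ), (v σ : ℚ) * r σ := by
  have split : ∀ w : Finset C → ℕ,
      ∑ τ ∈ Finset.univ.filter (fun τ : Finset C => j ∈ τ), (w τ : ℚ) * r τ
        = ∑ τ ∈ Finset.univ.filter (fun τ : Finset C => j ∈ τ ∧ A ∈ τ), (w τ : ℚ) * r τ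
          + ∑ τ ∈ Finset.univ.filter (fun τ : Finset C => j ∈ τ ∧ A ∉ τ), (w τ : ℚ) * r τ := by
    intro w
    rw [← Finset.sum_filter_add_sum_filter_not
      (Finset.univ.filter (fun τ : Finset C => j ∈ τ)) (fun τ => A ∈ τ)]
    rw [Finset.filter_filter, Finset.filter_filter]
  have hD : ∑ τ ∈ Finset.univ.filter (fun τ : Finset C => j ∈ τ ∧ A ∈ τ),
        (d (τ.erase A) : ℚ) * r τ
      = ∑ σ ∈ Finset.univ.filter (fun σ : Finset C => j ∈ σ ∧ A ∉ σ), (d σ : ℚ) * r σ := by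
    have e1 : ∑ τ ∈ Finset.univ.filter (fun τ : Finset C => j ∈ τ ∧ A ∈ τ),
          (d (τ.erase A) : ℚ) * r τ
        = ∑ τ ∈ Finset.univ.filter (fun τ : Finset C => A ∈ τ ∧ j ∈ τ.erase A),
            (fun σ => (d σ : ℚ) * r (insert A σ)) (τ.erase A) := by
      apply Finset.sum_congr
      · ext τ
        simp only [Finset.mem_filter, Finset.mem_univ, true_and, Finset.mem_erase]
        tauto
      · intro τ hτ
        simp only [Finset.mem_filter, Finset.mem_univ, true_and] at hτ
        simp only [Finset.insert_erase hτ.1]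
    rw [e1, reindexA A (fun σ => j ∈ σ) (fun σ => (d σ : ℚ) * r (insert A σ))]
    apply Finset.sum_congr
    · ext σ
      simp only [Finset.mem_filter, Finset.mem_univ, true_and]
      tauto
    · intro σ hσ
      simp only [Finset.mem_filter, Finset.mem_univ, true_and] at hσ
      rw [hr σ hσ.2]
  have part1 : ∑ τ ∈ Finset.univ.filter (fun τ : Finset C => j ∈ τ ∧ A ∈ τ), (v' τ : ℚ) * r τ
      = ∑ τ ∈ Finset.univ.filter (fun τ : Finset C => j ∈ τ ∧ A ∈ τ), (v τ : ℚ) * r τ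
        + ∑ σ ∈ Finset.univ.filter (fun σ : Finset C => j ∈ σ ∧ A ∉ σ), (d σ : ℚ) * r σ := by
    rw [← hD, ← Finset.sum_add_distrib]
    apply Finset.sum_congr rfl
    intro τ hτ
    simp only [Finset.mem_filter, Finset.mem_univ, true_and] at hτ
    have hne : τ ≠ {A} := by
      rintro rfl
      exact hj (Finset.mem_singleton.1 hτ.1)
    rw [hwith τ hτ.2, if_neg hne]
    push_cast
    ring
  have part2 : ∑ σ ∈ Finset.univ.filter (fun σ : Finset C => j ∈ σ ∧ A ∉ σ), (v' σ : ℚ) * r σ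
      = ∑ σ ∈ Finset.univ.filter (fun σ : Finset C => j ∈ σ ∧ A ∉ σ), (v σ : ℚ) * r σ
        - ∑ σ ∈ Finset.univ.filter (fun σ : Finset C => j ∈ σ ∧ A ∉ σ), (d σ : ℚ) * r σ := by
    rw [← Finset.sum_sub_distrib]
    apply Finset.sum_congr rfl
    intro σ hσ
    simp only [Finset.mem_filter, Finset.mem_univ, true_and] at hσ
    rw [hfree σ hσ.2, Nat.cast_sub (hd σ hσ.2)]
    ring
  rw [split v', split v, part1, part2]
  ring

lemma votes_eq (v v' : Finset C → ℕ) (A : C) (d : Finset C → ℕ) (a : ℕ)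
    (hd : ∀ σ : Finset C, A ∉ σ → d σ ≤ v σ)
    (hfree : ∀ σ : Finset C, A ∉ σ → v' σ = v σ - d σ)
    (hwith : ∀ σ : Finset C, A ∈ σ →
      v' σ = v σ + d (σ.erase A) + (if σ = {A} then a else 0))
    (j : C) (hj : j ≠ A) : phVotes v' j = phVotes v j := by
  have := sum_transfer v v' A d a hd hfree hwith j hj (fun _ => 1) (fun _ _ => rfl)
  simpa [phVotes, mul_one] using this

lemma loads_eq (v v' : Finset C → ℕ) (A : C) (d : Finset C → ℕ) (a : ℕ)
    (hd : ∀ σ : Finset C, A ∉ σ → d σ ≤ v σ)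
    (hfree : ∀ σ : Finset C, A ∉ σ → v' σ = v σ - d σ)
    (hwith : ∀ σ : Finset C, A ∈ σ →
      v' σ = v σ + d (σ.erase A) + (if σ = {A} then a else 0))
    (l : List C) (hAl : A ∉ l) : ∀ σ, phLoads v' l σ = phLoads v l σ := by
  induction l with
  | nil => intro σ; rfl
  | cons i l ih =>
    have hil : A ∉ l := fun h => hAl (List.mem_cons_of_mem _ h)
    have hiA : i ≠ A := fun h => hAl (h ▸ List.mem_cons_self (a := i) (l := l))
    intro σ
    simp only [phLoads]
    by_cases hi : i ∈ σ
    · simp only [hi, if_true]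
      unfold phT
      rw [votes_eq v v' A d a hd hfree hwith i hiA]
      congr 1
      rw [sum_transfer v v' A d a hd hfree hwith i hiA (phLoads v' l)
        (fun σ hσ => phLoads_insertA v' A l hil σ hσ)]
      exact congrArg _ (Finset.sum_congr rfl fun σ _ => by rw [ih hil σ])
    · simp only [hi, if_neg, ite_false]
      exact ih hil σ

lemma phT_eq (v v' : Finset C → ℕ) (A : C) (d : Finset C → ℕ) (a : ℕ)
    (hd : ∀ σ : Finset C, A ∉ σ → d σ ≤ v σ)
    (hfree : ∀ σ : Finset C, A ∉ σ → v' σ = v σ - d σ)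
    (hwith : ∀ σ : Finset C, A ∈ σ →
      v' σ = v σ + d (σ.erase A) + (if σ = {A} then a else 0))
    (l : List C) (hAl : A ∉ l) (j : C) (hj : j ≠ A) :
    phT v' (phLoads v' l) j = phT v (phLoads v l) j := by
  unfold phT
  rw [votes_eq v v' A d a hd hfree hwith j hj]
  congr 1
  rw [sum_transfer v v' A d a hd hfree hwith j hj (phLoads v' l)
    (fun σ hσ => phLoads_insertA v' A l hAl σ hσ)]
  exact congrArg _ (Finset.sum_congr rfl fun σ _ => by
    rw [loads_eq v v' A d a hd hfree hwith l hAl σ])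

lemma sumA_expand (v v' : Finset C → ℕ) (A : C) (d : Finset C → ℕ) (a : ℕ)
    (hwith : ∀ σ : Finset C, A ∈ σ →
      v' σ = v σ + d (σ.erase A) + (if σ = {A} then a else 0))
    (r : Finset C → ℚ) (hr : ∀ σ, A ∉ σ → r (insert A σ) = r σ) :
    ∑ τ ∈ Finset.univ.filter (fun τ : Finset C => A ∈ τ), (v' τ : ℚ) * r τ
      = ∑ τ ∈ Finset.univ.filter (fun τ : Finset C => A ∈ τ), (v τ : ℚ) * r τ
        + ∑ σ ∈ Finset.univ.filter (fun σ : Finset C => A ∉ σ), (d σ : ℚ) * r σ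
        + (a : ℚ) * r {A} := by
  have step : ∀ τ ∈ Finset.univ.filter (fun τ : Finset C => A ∈ τ),
      (v' τ : ℚ) * r τ = (v τ : ℚ) * r τ + (d (τ.erase A) : ℚ) * r τ
        + (if τ = {A} then (a : ℚ) else 0) * r τ := by
    intro τ hτ
    simp only [Finset.mem_filter, Finset.mem_univ, true_and] at hτ
    rw [hwith τ hτ]
    push_cast
    ring
  rw [Finset.sum_congr rfl step, Finset.sum_add_distrib, Finset.sum_add_distrib]
  congr 1
  · congr 1
    have e1 : ∑ τ ∈ Finset.univ.filter (fun τ : Finset C => A ∈ τ), (d (τ.erase A) : ℚ) * r τ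
        = ∑ τ ∈ Finset.univ.filter (fun τ : Finset C => A ∈ τ ∧ (fun _ : Finset C => True) (τ.erase A)),
            (fun σ => (d σ : ℚ) * r (insert A σ)) (τ.erase A) := by
      apply Finset.sum_congr
      · ext τ; simp
      · intro τ hτ
        simp only [Finset.mem_filter, Finset.mem_univ, true_and] at hτ
        simp only [Finset.insert_erase hτ.1]
    rw [e1, reindexA A (fun _ => True) (fun σ => (d σ : ℚ) * r (insert A σ))]
    apply Finset.sum_congr
    · ext σ; simp
    · intro σ hσ
      simp only [Finset.mem_filter, Finset.mem_univ, true_and, and_true] at hσ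
      rw [hr σ hσ]
  · rw [Finset.sum_eq_single ({A} : Finset C)]
    · simp
    · intro τ _ hne
      simp [hne]
    · intro h
      exact absurd (by simp : ({A} : Finset C) ∈ Finset.univ.filter (fun τ : Finset C => A ∈ τ)) h

lemma votesA (v v' : Finset C → ℕ) (A : C) (d : Finset C → ℕ) (a : ℕ)
    (hwith : ∀ σ : Finset C, A ∈ σ →
      v' σ = v σ + d (σ.erase A) + (if σ = {A} then a else 0)) :
    phVotes v' A = phVotes v A
      + (∑ σ ∈ Finset.univ.filter (fun σ : Finset C => A ∉ σ), (d σ : ℚ)) + a := by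
  have := sumA_expand v v' A d a hwith (fun _ => 1) (fun _ _ => rfl)
  simpa [phVotes, mul_one] using this

lemma votesA_pos (v v' : Finset C → ℕ) (A : C) (d : Finset C → ℕ) (a : ℕ)
    (hwith : ∀ σ : Finset C, A ∈ σ →
      v' σ = v σ + d (σ.erase A) + (if σ = {A} then a else 0))
    (hpos : 0 < phVotes v A) : 0 < phVotes v' A := by
  rw [votesA v v' A d a hwith]
  have hD : 0 ≤ ∑ σ ∈ Finset.univ.filter (fun σ : Finset C => A ∉ σ), (d σ : ℚ) :=
    Finset.sum_nonneg fun σ _ => by positivity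
  have ha : (0:ℚ) ≤ a := by positivity
  linarith

lemma tA_le (v v' : Finset C → ℕ) (A : C) (d : Finset C → ℕ) (a : ℕ)
    (hd : ∀ σ : Finset C, A ∉ σ → d σ ≤ v σ)
    (hfree : ∀ σ : Finset C, A ∉ σ → v' σ = v σ - d σ)
    (hwith : ∀ σ : Finset C, A ∈ σ →
      v' σ = v σ + d (σ.erase A) + (if σ = {A} then a else 0))
    (l : List C) (hval : phValid v l) (hAl : A ∉ l) (hposA : 0 < phVotes v A) :
    phT v' (phLoads v' l) A ≤ phT v (phLoads v l) A := by
  set r := phLoads v l with hrdef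
  set T := phT v r A with hTdef
  set W := phVotes v A with hWdef
  set D := ∑ σ ∈ Finset.univ.filter (fun σ : Finset C => A ∉ σ), (d σ : ℚ) with hDdef
  set N := ∑ τ ∈ Finset.univ.filter (fun τ : Finset C => A ∈ τ), (v τ : ℚ) * r τ with hNdef
  have hle : ∀ σ, r σ ≤ T := fun σ => loads_le v l hval A hAl hposA σ
  have hD0 : 0 ≤ D := Finset.sum_nonneg fun σ _ => by positivity
  have ha0 : (0:ℚ) ≤ a := by positivity
  have hWT : 1 + N = W * T := by
    rw [hTdef]
    unfold phT
    rw [← hNdef, ← hWdef]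
    field_simp
  have hnum : ∑ τ ∈ Finset.univ.filter (fun τ : Finset C => A ∈ τ), (v' τ : ℚ) * phLoads v' l τ
      = N + (∑ σ ∈ Finset.univ.filter (fun σ : Finset C => A ∉ σ), (d σ : ℚ) * r σ)
        + (a : ℚ) * r {A} := by
    rw [Finset.sum_congr rfl (fun τ _ => by
      rw [loads_eq v v' A d a hd hfree hwith l hAl τ])]
    exact sumA_expand v v' A d a hwith r (fun σ hσ => phLoads_insertA v A l hAl σ hσ)
  have hdsum : (∑ σ ∈ Finset.univ.filter (fun σ : Finset C => A ∉ σ), (d σ : ℚ) * r σ)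
      ≤ D * T := by
    rw [hDdef, Finset.sum_mul]
    apply Finset.sum_le_sum
    intro σ _
    exact mul_le_mul_of_nonneg_left (hle σ) (by positivity)
  have haT : (a : ℚ) * r {A} ≤ (a : ℚ) * T := mul_le_mul_of_nonneg_left (hle {A}) ha0
  have hW0 : 0 < W := hposA
  have hWDa : (0:ℚ) < W + D + a := by linarith
  show phT v' (phLoads v' l) A ≤ T
  unfold phT
  rw [votesA v v' A d a hwith, ← hWdef, ← hDdef, hnum, div_le_iff₀ hWDa]
  have hring : T * (W + D + (a:ℚ)) = W * T + D * T + (a:ℚ) * T := by ring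
  linarith

lemma replay (v v' : Finset C → ℕ) (A : C) (d : Finset C → ℕ) (a : ℕ)
    (hd : ∀ σ : Finset C, A ∉ σ → d σ ≤ v σ)
    (hfree : ∀ σ : Finset C, A ∉ σ → v' σ = v σ - d σ)
    (hwith : ∀ σ : Finset C, A ∈ σ →
      v' σ = v σ + d (σ.erase A) + (if σ = {A} then a else 0))
    (hposA : 0 < phVotes v A) :
    ∀ q : List C, phValid v q → A ∉ q →
    phValid v' q ∨ ∃ l', phValid v' (A :: l') ∧ A ∉ l' ∧ l'.Nodup ∧
      (∀ x ∈ l', x ∈ q) ∧ l'.length < q.length := by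
  intro q
  induction q with
  | nil => intro _ _; exact Or.inl trivial
  | cons i q ih =>
    intro hval hAq
    have hAq₀ : A ∉ q := fun h => hAq (List.mem_cons_of_mem _ h)
    have hiA : i ≠ A := fun h => hAq (h ▸ List.mem_cons_self (a := i) (l := q))
    obtain ⟨hq₀, hiq, hpi, hmin⟩ := hval
    rcases ih hq₀ hAq₀ with hv' | ⟨l', h1, h2, h3, h4, h5⟩
    · by_cases hAle : phT v' (phLoads v' q) A ≤ phT v' (phLoads v' q) i
      · right
        refine ⟨q, ⟨hv', hAq₀, votesA_pos v v' A d a hwith hposA, ?_⟩, hAq₀,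
          phValid_nodup v q hq₀, fun x hx => List.mem_cons_of_mem _ hx, Nat.lt_succ_self _⟩
        intro j hj hpj
        by_cases hjA : j = A
        · subst hjA; exact le_refl _
        · have hpjv : 0 < phVotes v j := by
            rwa [votes_eq v v' A d a hd hfree hwith j hjA] at hpj
          calc phT v' (phLoads v' q) A ≤ phT v' (phLoads v' q) i := hAle
            _ = phT v (phLoads v q) i := phT_eq v v' A d a hd hfree hwith q hAq₀ i hiA
            _ ≤ phT v (phLoads v q) j := hmin j hj hpjv
            _ = phT v' (phLoads v' q) j :=
              (phT_eq v v' A d a hd hfree hwith q hAq₀ j hjA).symm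
      · left
        refine ⟨hv', hiq, by rwa [votes_eq v v' A d a hd hfree hwith i hiA], ?_⟩
        intro j hj hpj
        by_cases hjA : j = A
        · subst hjA; exact le_of_lt (lt_of_not_ge hAle)
        · have hpjv : 0 < phVotes v j := by
            rwa [votes_eq v v' A d a hd hfree hwith j hjA] at hpj
          calc phT v' (phLoads v' q) i
              = phT v (phLoads v q) i := phT_eq v v' A d a hd hfree hwith q hAq₀ i hiA
            _ ≤ phT v (phLoads v q) j := hmin j hj hpjv
            _ = phT v' (phLoads v' q) j :=
              (phT_eq v v' A d a hd hfree hwith q hAq₀ j hjA).symm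
    · right
      exact ⟨l', h1, h2, h3, fun x hx => List.mem_cons_of_mem _ (h4 x hx),
        Nat.lt_succ_of_lt h5⟩

lemma extend (v' : Finset C → ℕ) (M : ℕ)
    (hcard : M ≤ (Finset.univ.filter (fun c : C => 0 < phVotes v' c)).card) :
    ∀ n (w : List C), phValid v' w → w.Nodup → w.length + n = M →
      ∃ w', phValid v' w' ∧ w'.length = M ∧ ∀ x ∈ w, x ∈ w' := by
  intro n
  induction n with
  | zero => intro w hw _ hlen; exact ⟨w, hw, by omega, fun x hx => hx⟩
  | succ n ih =>
    intro w hw hnd hlen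
    have h1 : w.toFinset.card ≤ w.length := w.toFinset_card_le
    have h2 := Finset.le_card_sdiff w.toFinset
      (Finset.univ.filter (fun c : C => 0 < phVotes v' c))
    have hne : ((Finset.univ.filter (fun c : C => 0 < phVotes v' c)) \ w.toFinset).Nonempty :=
      Finset.card_pos.1 (by omega)
    obtain ⟨i, hi, hmin⟩ := Finset.exists_min_image _ (phT v' (phLoads v' w)) hne
    simp only [Finset.mem_sdiff, Finset.mem_filter, Finset.mem_univ, true_and,
      List.mem_toFinset] at hi
    have hw' : phValid v' (i :: w) :=
      ⟨hw, hi.2, hi.1, fun j hj hpj => hmin j (by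
        simp only [Finset.mem_sdiff, Finset.mem_filter, Finset.mem_univ, true_and,
          List.mem_toFinset]
        exact ⟨hpj, hj⟩)⟩
    obtain ⟨w', g1, g2, g3⟩ := ih (i :: w) hw' (List.nodup_cons.2 ⟨hi.2, hnd⟩)
      (by simp only [List.length_cons]; omega)
    exact ⟨w', g1, g2, fun x hx => g3 x (List.mem_cons_of_mem _ hx)⟩

/-- Monotonicity of Phragmén's unordered method: let the profile `v'` be obtained
from `v` by adding `a` new ballots containing only `A` and, for each ballot type
`σ` with `A ∉ σ`, changing `d σ ≤ v σ` ballots of type `σ` into `σ ∪ {A}`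
(no other changes, so every candidate other than `A` receives exactly the same
votes as before).  If some possible outcome of Phragmén's unordered method on `v`
for `M` seats contains `A`, then some possible outcome on `v'` for `M` seats
contains `A`. -/
theorem stmt_7 {C : Type} [Fintype C] [DecidableEq C]
    (v v' : Finset C → ℕ) (A : C) (d : Finset C → ℕ) (a : ℕ)
    (hd : ∀ σ : Finset C, A ∉ σ → d σ ≤ v σ)
    (hfree : ∀ σ : Finset C, A ∉ σ → v' σ = v σ - d σ)
    (hwith : ∀ σ : Finset C, A ∈ σ →
      v' σ = v σ + d (σ.erase A) + (if σ = {A} then a else 0))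
    (M : ℕ) (hM1 : 1 ≤ M) (hM2 : M ≤ Fintype.card C)
    (h : ∃ S : Finset C, PhragmenOutcome v M S ∧ A ∈ S) :
    ∃ S' : Finset C, PhragmenOutcome v' M S' ∧ A ∈ S' := by
  obtain ⟨S, ⟨l, hval, hlen, htf⟩, hAS⟩ := h
  have hAl : A ∈ l := by rw [← List.mem_toFinset, htf]; exact hAS
  obtain ⟨p, q, rfl⟩ := List.append_of_mem hAl
  have hnd : (p ++ A :: q).Nodup := phValid_nodup v _ hval
  have hAq : A ∉ q := (List.nodup_cons.1 (hnd.of_append_right)).1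
  have hvAq : phValid v (A :: q) := phValid_suffix v p (A :: q) hval
  obtain ⟨hq, _, hposA, hminA⟩ := hvAq
  have hqlen : q.length + 1 ≤ M := by
    rw [← hlen, List.length_append, List.length_cons]; omega
  have key : ∃ w : List C, phValid v' w ∧ A ∈ w ∧ w.Nodup ∧ w.length ≤ M := by
    rcases replay v v' A d a hd hfree hwith hposA q hq hAq with hv'q | ⟨l', h1, h2, h3, _, h5⟩
    · refine ⟨A :: q, ⟨hv'q, hAq, votesA_pos v v' A d a hwith hposA, ?_⟩,
        List.mem_cons_self, List.nodup_cons.2 ⟨hAq, phValid_nodup v q hq⟩, by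
          simpa using hqlen⟩
      intro j hj hpj
      by_cases hjA : j = A
      · subst hjA; exact le_refl _
      · have hpjv : 0 < phVotes v j := by
          rwa [votes_eq v v' A d a hd hfree hwith j hjA] at hpj
        calc phT v' (phLoads v' q) A
            ≤ phT v (phLoads v q) A := tA_le v v' A d a hd hfree hwith q hq hAq hposA
          _ ≤ phT v (phLoads v q) j := hminA j hj hpjv
          _ = phT v' (phLoads v' q) j :=
            (phT_eq v v' A d a hd hfree hwith q hAq j hjA).symm
    · exact ⟨A :: l', h1, List.mem_cons_self, List.nodup_cons.2 ⟨h2, h3⟩, by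
        simp only [List.length_cons]; omega⟩
  have hcard : M ≤ (Finset.univ.filter (fun c : C => 0 < phVotes v' c)).card := by
    have hsub : (p ++ A :: q).toFinset ⊆
        Finset.univ.filter (fun c : C => 0 < phVotes v' c) := by
      intro c hc
      rw [List.mem_toFinset] at hc
      simp only [Finset.mem_filter, Finset.mem_univ, true_and]
      by_cases hcA : c = A
      · rw [hcA]; exact votesA_pos v v' A d a hwith hposA
      · rw [votes_eq v v' A d a hd hfree hwith c hcA]
        exact phValid_pos v _ hval c hc
    calc M = (p ++ A :: q).length := hlen.symm
      _ = (p ++ A :: q).toFinset.card := (List.toFinset_card_of_nodup hnd).symm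
      _ ≤ _ := Finset.card_le_card hsub
  obtain ⟨w, hw, hAw, hwnd, hwlen⟩ := key
  obtain ⟨w', g1, g2, g3⟩ := extend v' M hcard (M - w.length) w hw hwnd (by omega)
  exact ⟨w'.toFinset, ⟨w', g1, g2, rfl⟩, List.mem_toFinset.2 (g3 A hAw)⟩
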